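/- For integer n ≥ 1 the derivative of ζ_ℤ at −n equals binom(2n,n) · ( H_n − 2·(1 + 1/3 + ⋯ + 1/(2n−1)) ), where H_n = 1 + 1/2 + ⋯ + 1/n is the n-th harmonic number. -/

import Mathlib

open Complex Finset

/-- The (meromorphically continued) spectral zeta function of the graph ℤ. -/
noncomputable def zetaZ (s : ℂ) : ℂ :=
  (4 : ℂ) ^ (-s) * ((Real.sqrt Real.pi : ℂ))⁻¹ *
    Complex.Gamma (1 / 2 - s) / Complex.Gamma (1 - s)

private lemma gamma_diff {s : ℂ} (hs : 0 < s.re) : DifferentiableAt ℂ Complex.Gamma s := by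
  refine Complex.differentiableAt_Gamma s fun m => ?_
  intro h
  have := congrArg Complex.re h
  simp at this
  have : (0:ℝ) ≤ m := Nat.cast_nonneg m
  linarith [congrArg Complex.re h, this]

private lemma gamma_half : Complex.Gamma (1/2) = (Real.sqrt Real.pi : ℂ) := by
  rw [show (1/2 : ℂ) = ((1/2:ℝ):ℂ) by norm_num, Complex.Gamma_ofReal,
    Real.Gamma_one_half_eq]

private lemma sqrt_pi_ne : (Real.sqrt Real.pi : ℂ) ≠ 0 := by
  exact Complex.ofReal_ne_zero.mpr (Real.sqrt_ne_zero'.mpr Real.pi_pos)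

/-- Key digamma fact via the duplication formula. -/
private lemma deriv_gamma_half :
    deriv Complex.Gamma (1/2) =
      (Real.sqrt Real.pi : ℂ) * (deriv Complex.Gamma 1 - 2 * Complex.log 2) := by
  set A := deriv Complex.Gamma (1/2) with hA
  set B := deriv Complex.Gamma 1 with hB
  have hG1 : HasDerivAt Complex.Gamma B 1 := (gamma_diff (by norm_num)).hasDerivAt
  have hGh : HasDerivAt Complex.Gamma A (1/2) := (gamma_diff (by norm_num)).hasDerivAt
  have hL : HasDerivAt (fun s => Complex.Gamma s * Complex.Gamma (s + 1/2))
      (A * Complex.Gamma (1/2 + 1/2) + Complex.Gamma (1/2) * (B * 1)) (1/2) := by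
    refine hGh.mul ?_
    have hinner : HasDerivAt (fun s : ℂ => s + 1/2) 1 (1/2) := (hasDerivAt_id _).add_const _
    have := HasDerivAt.comp_of_eq ((1:ℂ)/2) hG1 hinner (by norm_num)
    simpa [Function.comp_def] using this
  have hR : HasDerivAt (fun s : ℂ => Complex.Gamma (2*s) * (2:ℂ) ^ (1 - 2*s) * (Real.sqrt Real.pi : ℂ))
      ((B * 2 * (2:ℂ) ^ (1 - 2*(1/2:ℂ)) +
        Complex.Gamma (2*(1/2:ℂ)) * ((2:ℂ) ^ (1 - 2*(1/2:ℂ)) * Complex.log 2 * (-2))) * (Real.sqrt Real.pi : ℂ)) (1/2) := by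
    refine HasDerivAt.mul_const ?_ _
    refine HasDerivAt.mul ?_ ?_
    · have hinner : HasDerivAt (fun s : ℂ => 2*s) 2 (1/2) := by
        simpa using (hasDerivAt_id (1/2 : ℂ)).const_mul (2:ℂ)
      have := HasDerivAt.comp_of_eq ((1:ℂ)/2) hG1 hinner (by norm_num)
      simpa [Function.comp_def] using this
    · have hinner : HasDerivAt (fun s : ℂ => 1 - 2*s) (-2) (1/2) := by
        simpa using ((hasDerivAt_id (1/2 : ℂ)).const_mul (2:ℂ)).const_sub 1
      exact hinner.const_cpow (Or.inl two_ne_zero)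
  have heq : (fun s => Complex.Gamma s * Complex.Gamma (s + 1/2)) =
      (fun s : ℂ => Complex.Gamma (2*s) * (2:ℂ) ^ (1 - 2*s) * (Real.sqrt Real.pi : ℂ)) := by
    funext s; exact Complex.Gamma_mul_Gamma_add_half s
  have hderiv := hL.deriv
  rw [heq, hR.deriv] at hderiv
  have h1 : (1 : ℂ) - 2*(1/2:ℂ) = 0 := by norm_num
  have h2 : (2:ℂ)*(1/2:ℂ) = 1 := by norm_num
  rw [h1, h2, Complex.cpow_zero, Complex.Gamma_one] at hderiv
  norm_num [gamma_half] at hderiv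
  linear_combination -hderiv

private lemma zetaZ_diff {s : ℂ} (hs : s.re < 1/2) : DifferentiableAt ℂ zetaZ s := by
  unfold zetaZ
  have h1 : DifferentiableAt ℂ (fun s : ℂ => (4:ℂ) ^ (-s)) s :=
    (differentiable_neg.differentiableAt).const_cpow (Or.inl (by norm_num))
  have h2 : DifferentiableAt ℂ (fun t : ℂ => Complex.Gamma (1/2 - t)) s := by
    refine DifferentiableAt.comp s (gamma_diff ?_)
      ((differentiableAt_const _).sub differentiableAt_id)
    simp only [Complex.sub_re]
    norm_num
    linarith
  have h3 : DifferentiableAt ℂ (fun t : ℂ => Complex.Gamma (1 - t)) s := by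
    refine DifferentiableAt.comp s (gamma_diff ?_)
      ((differentiableAt_const _).sub differentiableAt_id)
    simp only [Complex.sub_re]
    norm_num
    linarith
  have hne : Complex.Gamma (1 - s) ≠ 0 := by
    refine Complex.Gamma_ne_zero_of_re_pos ?_
    simp only [Complex.sub_re]
    norm_num
    linarith
  exact ((h1.mul_const _).mul h2).div h3 hne

private lemma zetaZ_deriv_zero : deriv zetaZ 0 = 0 := by
  set A := deriv Complex.Gamma (1/2) with hA
  set B := deriv Complex.Gamma 1 with hB
  have h1 : HasDerivAt (fun s : ℂ => (4:ℂ) ^ (-s))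
      ((4:ℂ) ^ (-(0:ℂ)) * Complex.log 4 * (-1)) 0 := by
    have : HasDerivAt (fun s : ℂ => -s) (-1) (0:ℂ) := (hasDerivAt_id _).neg
    exact this.const_cpow (Or.inl (by norm_num))
  have hGh : HasDerivAt Complex.Gamma A (1/2) := (gamma_diff (by norm_num)).hasDerivAt
  have hG1 : HasDerivAt Complex.Gamma B 1 := (gamma_diff (by norm_num)).hasDerivAt
  have h2 : HasDerivAt (fun s : ℂ => Complex.Gamma (1/2 - s)) (A * (-1)) 0 := by
    have hinner : HasDerivAt (fun s : ℂ => 1/2 - s) (-1) (0:ℂ) := (hasDerivAt_id _).const_sub _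
    have := HasDerivAt.comp_of_eq ((0:ℂ)) hGh hinner (by norm_num)
    simpa [Function.comp_def] using this
  have h3 : HasDerivAt (fun s : ℂ => Complex.Gamma (1 - s)) (B * (-1)) 0 := by
    have hinner : HasDerivAt (fun s : ℂ => 1 - s) (-1) (0:ℂ) := (hasDerivAt_id _).const_sub _
    have := HasDerivAt.comp_of_eq ((0:ℂ)) hG1 hinner (by norm_num)
    simpa [Function.comp_def] using this
  have hne : Complex.Gamma (1 - (0:ℂ)) ≠ 0 := by
    rw [sub_zero, Complex.Gamma_one]; norm_num
  have hall := ((h1.mul_const ((Real.sqrt Real.pi : ℂ))⁻¹).mul h2).div h3 hne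
  unfold zetaZ
  have hall' : HasDerivAt (fun s : ℂ => (4 : ℂ) ^ (-s) * ((Real.sqrt Real.pi : ℂ))⁻¹ *
    Complex.Gamma (1 / 2 - s) / Complex.Gamma (1 - s)) _ 0 := hall
  simp only [Pi.mul_apply] at hall'
  rw [hall'.deriv]
  have hlog4 : Complex.log 4 = 2 * Complex.log 2 := by
    rw [show (4:ℂ) = 2^(2:ℕ) by norm_num, show (2:ℂ) = ((2:ℝ):ℂ) by norm_num]
    rw [← Complex.ofReal_pow, ← Complex.ofReal_log (by positivity),
      ← Complex.ofReal_log (by norm_num)]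
    rw [Real.log_pow]
    push_cast
    ring
  rw [neg_zero, Complex.cpow_zero, sub_zero, sub_zero, Complex.Gamma_one, gamma_half,
    hlog4]
  rw [show A = (Real.sqrt Real.pi : ℂ) * (B - 2 * Complex.log 2) from deriv_gamma_half]
  field_simp
  ring

private lemma zetaZ_shift {s : ℂ} (h1 : s ≠ 1/2) (h2 : s ≠ 1) :
    zetaZ (s - 1) = (2 - 4*s)/(1 - s) * zetaZ s := by
  unfold zetaZ
  have n1 : (1:ℂ)/2 - s ≠ 0 := sub_ne_zero.mpr (Ne.symm h1)
  have n2 : (1:ℂ) - s ≠ 0 := sub_ne_zero.mpr (Ne.symm h2)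
  rw [show (1:ℂ)/2 - (s - 1) = (1/2 - s) + 1 by ring,
    show (1:ℂ) - (s - 1) = (1 - s) + 1 by ring,
    Complex.Gamma_add_one _ n1, Complex.Gamma_add_one _ n2,
    show -(s - 1) = -s + 1 by ring,
    Complex.cpow_add _ _ (by norm_num : (4:ℂ) ≠ 0), Complex.cpow_one]
  by_cases hy : Complex.Gamma (1 - s) = 0
  · simp [hy]
  · field_simp [n2, hy, sqrt_pi_ne]
    ring

private lemma cast_ne_half (n : ℕ) : -(n:ℂ) ≠ 1/2 := by
  intro h
  have := congrArg Complex.re h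
  simp at this
  have : (0:ℝ) ≤ (n:ℝ) := Nat.cast_nonneg n
  norm_num at *
  linarith

private lemma cast_ne_one (n : ℕ) : -(n:ℂ) ≠ 1 := by
  intro h
  have := congrArg Complex.re h
  simp at this
  have h0 : (0:ℝ) ≤ (n:ℝ) := Nat.cast_nonneg n
  norm_num at *
  linarith

private lemma main_ind (n : ℕ) : zetaZ (-(n:ℂ)) = ((2*n).choose n : ℂ) ∧
    deriv zetaZ (-(n:ℂ)) = ((2*n).choose n : ℂ) *
      ((∑ i ∈ Finset.range n, (1:ℂ)/(i+1)) - 2 * ∑ i ∈ Finset.range n, (1:ℂ)/(2*i+1)) := by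
  induction n with
  | zero =>
    constructor
    · rw [show -((0:ℕ):ℂ) = 0 by norm_num]
      unfold zetaZ
      rw [neg_zero, Complex.cpow_zero, sub_zero, sub_zero, Complex.Gamma_one, gamma_half]
      simp [inv_mul_cancel₀ sqrt_pi_ne]
    · rw [show -((0:ℕ):ℂ) = 0 by norm_num, zetaZ_deriv_zero]
      simp
  | succ n ih =>
    obtain ⟨hv, hd⟩ := ih
    have hre : (-(n:ℂ)).re < 1/2 := by
      simp only [Complex.neg_re, Complex.natCast_re]
      have : (0:ℝ) ≤ (n:ℝ) := Nat.cast_nonneg n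
      linarith
    have hpt : -((n+1 : ℕ):ℂ) = -(n:ℂ) - 1 := by push_cast; ring
    have hden : (1:ℂ) - (-(n:ℂ)) ≠ 0 := sub_ne_zero.mpr (Ne.symm (cast_ne_one n))
    -- the central binomial recurrence
    have hcb : ((n+1) * ((2*(n+1)).choose (n+1)) : ℕ) = 2*(2*n+1) * ((2*n).choose n) := by
      have := Nat.succ_mul_centralBinom_succ n
      simpa [Nat.centralBinom] using this
    have hcbC : ((n:ℂ)+1) * ((2*(n+1)).choose (n+1) : ℂ)
        = 2*(2*(n:ℂ)+1) * ((2*n).choose n : ℂ) := by exact_mod_cast hcb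
    have hn1 : ((n:ℂ)+1) ≠ 0 := Nat.cast_add_one_ne_zero n
    have h2n1 : (2*(n:ℂ)+1) ≠ 0 := by
      intro h
      have := congrArg Complex.re h
      simp at this
      have : (0:ℝ) ≤ (n:ℝ) := Nat.cast_nonneg n
      norm_num at *
      linarith
    have hC' : (((2*(n+1)).choose (n+1) : ℕ) : ℂ)
        = 2*(2*(n:ℂ)+1) * ((2*n).choose n : ℂ) / ((n:ℂ)+1) := by
      field_simp
      linear_combination hcbC
    have hfe := zetaZ_shift (cast_ne_half n) (cast_ne_one n)
    -- value
    have hval : zetaZ (-((n+1 : ℕ):ℂ)) = ((2*(n+1)).choose (n+1) : ℂ) := by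
      rw [hpt, hfe, hv, hC']
      have e1 : (2:ℂ) - 4*(-(n:ℂ)) = 2*(2*(n:ℂ)+1) := by ring
      have e2 : (1:ℂ) - (-(n:ℂ)) = (n:ℂ)+1 := by ring
      rw [e1, e2]
      ring
    refine ⟨hval, ?_⟩
    -- derivative
    have hEv : (fun s => zetaZ (s - 1)) =ᶠ[nhds (-(n:ℂ))]
        fun s => (2 - 4*s)/(1 - s) * zetaZ s := by
      filter_upwards [eventually_ne_nhds (cast_ne_half n),
        eventually_ne_nhds (cast_ne_one n)] with s hs1 hs2
      exact zetaZ_shift hs1 hs2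
    have hr : HasDerivAt (fun s : ℂ => (2 - 4*s)/(1 - s))
        (((-4)*(1 - (-(n:ℂ))) - (2 - 4*(-(n:ℂ)))*(-1))/(1 - (-(n:ℂ)))^2) (-(n:ℂ)) := by
      have ha : HasDerivAt (fun s : ℂ => 2 - 4*s) (-4) (-(n:ℂ)) := by
        simpa using ((hasDerivAt_id (-(n:ℂ))).const_mul (4:ℂ)).const_sub 2
      have hb : HasDerivAt (fun s : ℂ => 1 - s) (-1) (-(n:ℂ)) :=
        (hasDerivAt_id _).const_sub 1
      exact ha.div hb hden
    have hmul : HasDerivAt (fun s => (2 - 4*s)/(1 - s) * zetaZ s)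
        ((((-4)*(1 - (-(n:ℂ))) - (2 - 4*(-(n:ℂ)))*(-1))/(1 - (-(n:ℂ)))^2) * zetaZ (-(n:ℂ))
          + ((2 - 4*(-(n:ℂ)))/(1 - (-(n:ℂ)))) * deriv zetaZ (-(n:ℂ))) (-(n:ℂ)) :=
      hr.mul (zetaZ_diff hre).hasDerivAt
    have hkey : deriv zetaZ (-((n+1:ℕ):ℂ)) =
        (((-4)*(1 - (-(n:ℂ))) - (2 - 4*(-(n:ℂ)))*(-1))/(1 - (-(n:ℂ)))^2) * zetaZ (-(n:ℂ))
          + ((2 - 4*(-(n:ℂ)))/(1 - (-(n:ℂ)))) * deriv zetaZ (-(n:ℂ)) := by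
      rw [hpt, ← deriv_comp_sub_const (f := zetaZ) (a := (1:ℂ)) (x := -(n:ℂ)),
        hEv.deriv_eq, hmul.deriv]
    rw [hkey, hv, hd, hC']
    rw [show (2:ℂ) - 4*(-(n:ℂ)) = 2*(2*(n:ℂ)+1) by ring,
      show (1:ℂ) - (-(n:ℂ)) = (n:ℂ)+1 by ring]
    rw [Finset.sum_range_succ, Finset.sum_range_succ]
    field_simp [hn1, h2n1]
    have h2n1' : (n:ℂ)*2+1 ≠ 0 := by rw [mul_comm]; exact h2n1
    linear_combination (4 * ((2*n).choose n : ℂ) * ((n:ℂ)+1)) * mul_one_div_cancel h2n1'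

theorem zetaZ_deriv_neg_int (n : ℕ) (hn : 1 ≤ n) :
    deriv zetaZ (-(n : ℂ)) =
      (Nat.choose (2 * n) n : ℂ) *
        ((∑ i ∈ Finset.range n, (1 : ℂ) / (i + 1)) -
          2 * ∑ i ∈ Finset.range n, (1 : ℂ) / (2 * i + 1)) := by
  exact (main_ind n).2
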